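/- Let λ_1,…,λ_d > 0, n ∈ ℕ, and b, d, σ² > 0, and define h(α) = Σ_{k=1}^d (σ²λ_k + (b/d)n²α²)/((λ_k + nα)²) for α > 0. Then h'(α) = 2n·(α n b/d − σ²·(d/d))·Σ_k λ_k/(λ_k+nα)³ vanishes only at α* = dσ²/(nb), h attains its minimum on (0,∞) at α* = dσ²/(nb), and h(α*) = Σ_{k=1}^d σ²/(λ_k + nα*). -/

import Mathlib

open Finset

/-- Optimal ridge tuning (Appendix C.1): for
`h(α) = Σ_k (σ²λ_k + (b/d)n²α²)/((λ_k + nα)²)` with `λ_k > 0`, the derivative is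
`2n(αnb/d − σ²)·Σ_k λ_k/(λ_k + nα)³`, which vanishes on `(0,∞)` only at
`α* = dσ²/(nb)`; `h` attains its minimum on `(0,∞)` at `α*`, and
`h(α*) = Σ_k σ²/(λ_k + nα*)`. -/
theorem stmt19 (d n : ℕ) (hd : 0 < d) (hn : 0 < n)
    (lam : Fin d → ℝ) (hlam : ∀ k, 0 < lam k)
    (b sigSq : ℝ) (hb : 0 < b) (hsig : 0 < sigSq)
    (h : ℝ → ℝ)
    (hh : ∀ α : ℝ, h α = ∑ k : Fin d,
      (sigSq * lam k + (b / (d : ℝ)) * (n : ℝ) ^ 2 * α ^ 2) /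
        (lam k + (n : ℝ) * α) ^ 2)
    (αstar : ℝ) (hαstar : αstar = (d : ℝ) * sigSq / ((n : ℝ) * b)) :
    (∀ α : ℝ, 0 < α → HasDerivAt h
      (2 * (n : ℝ) * (α * (n : ℝ) * b / (d : ℝ) - sigSq) *
        ∑ k : Fin d, lam k / (lam k + (n : ℝ) * α) ^ 3) α) ∧
    (∀ α : ℝ, 0 < α → (deriv h α = 0 ↔ α = αstar)) ∧
    (∀ α : ℝ, 0 < α → h αstar ≤ h α) ∧
    h αstar = ∑ k : Fin d, sigSq / (lam k + (n : ℝ) * αstar) := by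
  have hdR : (0 : ℝ) < d := by exact_mod_cast hd
  have hnR : (0 : ℝ) < n := by exact_mod_cast hn
  have hαs : 0 < αstar := by
    rw [hαstar]; positivity
  have hden : ∀ (k : Fin d) (α : ℝ), 0 < α → 0 < lam k + (n : ℝ) * α := by
    intro k α hα; have := hlam k; positivity
  -- the derivative claim
  have hderiv : ∀ α : ℝ, 0 < α → HasDerivAt h
      (2 * (n : ℝ) * (α * (n : ℝ) * b / (d : ℝ) - sigSq) *
        ∑ k : Fin d, lam k / (lam k + (n : ℝ) * α) ^ 3) α := by
    intro α hα
    have heq : h = fun α : ℝ => ∑ k : Fin d,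
        (sigSq * lam k + (b / (d : ℝ)) * (n : ℝ) ^ 2 * α ^ 2) /
          (lam k + (n : ℝ) * α) ^ 2 := funext hh
    rw [heq, mul_sum]
    apply HasDerivAt.fun_sum
    intro k _
    have hdk := hden k α hα
    have hu : HasDerivAt (fun α : ℝ => sigSq * lam k + (b / (d : ℝ)) * (n : ℝ) ^ 2 * α ^ 2)
        ((b / (d : ℝ)) * (n : ℝ) ^ 2 * (2 * α)) α := by
      have := ((hasDerivAt_pow 2 α).const_mul ((b / (d : ℝ)) * (n : ℝ) ^ 2)).const_add
        (sigSq * lam k)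
      simpa [mul_comm, mul_assoc] using this
    have hv : HasDerivAt (fun α : ℝ => (lam k + (n : ℝ) * α) ^ 2)
        (2 * (lam k + (n : ℝ) * α) * (n : ℝ)) α := by
      have hl : HasDerivAt (fun α : ℝ => lam k + (n : ℝ) * α) (n : ℝ) α := by
        simpa using ((hasDerivAt_id α).const_mul (n : ℝ)).const_add (lam k)
      have := (hl.fun_pow 2)
      simpa [mul_comm, mul_assoc] using this
    have hdiv := hu.fun_div hv (by positivity)
    convert hdiv using 1
    · rfl
    have hdk' : (lam k + (n : ℝ) * α) ≠ 0 := ne_of_gt hdk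
    field_simp
    ring
  refine ⟨hderiv, ?_, ?_, ?_⟩
  · -- deriv zero iff
    intro α hα
    rw [(hderiv α hα).deriv]
    have hsum : 0 < ∑ k : Fin d, lam k / (lam k + (n : ℝ) * α) ^ 3 := by
      apply Finset.sum_pos
      · intro k _
        have := hden k α hα
        have := hlam k
        positivity
      · haveI : Nonempty (Fin d) := Fin.pos_iff_nonempty.mp hd
        exact Finset.univ_nonempty
    constructor
    · intro h0
      have h1 : 2 * (n : ℝ) * (α * (n : ℝ) * b / (d : ℝ) - sigSq) = 0 := by
        rcases mul_eq_zero.mp h0 with h2 | h2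
        · exact h2
        · exact absurd h2 (ne_of_gt hsum)
      have h2 : α * (n : ℝ) * b / (d : ℝ) - sigSq = 0 := by
        rcases mul_eq_zero.mp h1 with h3 | h3
        · nlinarith
        · exact h3
      have h3 : α * (n : ℝ) * b = sigSq * (d : ℝ) := by
        have hd0 : (d : ℝ) ≠ 0 := ne_of_gt hdR
        field_simp at h2
        linarith
      rw [hαstar, eq_div_iff (ne_of_gt (mul_pos hnR hb))]
      linear_combination h3
    · intro hαeq
      have : α * (n : ℝ) * b / (d : ℝ) - sigSq = 0 := by
        rw [hαeq, hαstar]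
        field_simp
        ring
      rw [this]
      ring
  · -- minimum
    intro α hα
    rw [hh, hh]
    apply Finset.sum_le_sum
    intro k _
    have hdk := hden k α hα
    have hdks := hden k αstar hαs
    have hlk := hlam k
    have hd0 : (d : ℝ) ≠ 0 := ne_of_gt hdR
    have hn0 : (n : ℝ) ≠ 0 := ne_of_gt hnR
    have hb0 : b ≠ 0 := ne_of_gt hb
    rw [div_le_div_iff₀ (by positivity) (by positivity), hαstar]
    rw [← sub_nonneg]
    have key : (sigSq * lam k + b / (d:ℝ) * (n:ℝ) ^ 2 * α ^ 2) *
          (lam k + (n:ℝ) * ((d:ℝ) * sigSq / ((n:ℝ) * b))) ^ 2 -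
        (sigSq * lam k + b / (d:ℝ) * (n:ℝ) ^ 2 * ((d:ℝ) * sigSq / ((n:ℝ) * b)) ^ 2) *
          (lam k + (n:ℝ) * α) ^ 2 =
        lam k * ((d:ℝ) * sigSq - b * (n:ℝ) * α) ^ 2 * (lam k * b + (d:ℝ) * sigSq) /
          ((d:ℝ) * b ^ 2) := by
      field_simp
      ring
    rw [key]
    positivity
  · -- value at αstar
    rw [hh]
    apply Finset.sum_congr rfl
    intro k _
    have hdks := hden k αstar hαs
    have hd0 : (d : ℝ) ≠ 0 := ne_of_gt hdR
    have hn0 : (n : ℝ) ≠ 0 := ne_of_gt hnR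
    have hb0 : b ≠ 0 := ne_of_gt hb
    rw [div_eq_div_iff (by positivity) (ne_of_gt hdks), hαstar]
    field_simp
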